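/- Let the pair (ρ^AI, ρ^H) be consistent with the Luce Alignment Model with parameters (u, v, α). Then ρ^AI satisfies IIA if and only if α = 0, or α = 1, or there exists λ > 0 such that v(x) = λ·u(x) for all x ∈ X. -/

import Mathlib

open Finset

/-- A stochastic choice function: values in `[0,1]`, positive only on the menu,
and summing to one over each nonempty menu. -/
def IsSCF {X : Type*} (ρ : X → Finset X → ℝ) : Prop :=
  ∀ S : Finset X, S.Nonempty →
    (∀ x, 0 ≤ ρ x S ∧ ρ x S ≤ 1) ∧ (∀ x, 0 < ρ x S → x ∈ S) ∧ (∑ x ∈ S, ρ x S) = 1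

/-- Independence of Irrelevant Alternatives. -/
def IIA {X : Type*} [DecidableEq X] (ρ : X → Finset X → ℝ) : Prop :=
  ∀ S T : Finset X, S.Nonempty → T.Nonempty →
    ∀ x ∈ S ∩ T, ∀ y ∈ S ∩ T, ρ x S * ρ y T = ρ x T * ρ y S

/-- Own instability `Δ_{xy}(S,T|ρ)`. -/
noncomputable def Delta {X : Type*} (ρ : X → Finset X → ℝ) (x y : X) (S T : Finset X) : ℝ :=
  ρ x S * ρ y T - ρ y S * ρ x T

/-- Cross instability `Γ_{xy}(S,T|ρ,ρ')`. -/
noncomputable def Gamma {X : Type*} (ρ ρ' : X → Finset X → ℝ) (x y : X) (S T : Finset X) : ℝ :=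
  ρ x S * ρ' y T - ρ y S * ρ' x T

/-- Composite instability `Φ_{xy}(S,T|ρ,ρ')`. -/
noncomputable def Phi {X : Type*} (ρ ρ' : X → Finset X → ℝ) (x y : X) (S T : Finset X) : ℝ :=
  Gamma ρ ρ' x y S T + Gamma ρ' ρ x y S T

/-- The Luce rule with utility `u`. -/
noncomputable def LuceRule {X : Type*} (u : X → ℝ) (x : X) (S : Finset X) : ℝ :=
  u x / ∑ y ∈ S, u y

/-- `ρAI` is consistent with the Luce Alignment Model with parameters `(u, v, α)`. -/
def LAM1 {X : Type*} (ρAI : X → Finset X → ℝ) (u v : X → ℝ) (α : ℝ) : Prop :=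
  (∀ x, 0 < u x) ∧ (∀ x, 0 < v x) ∧ 0 ≤ α ∧ α ≤ 1 ∧
    ∀ S : Finset X, S.Nonempty → ∀ x ∈ S,
      ρAI x S = α * (u x / ∑ y ∈ S, u y) + (1 - α) * (v x / ∑ y ∈ S, v y)

/-- The pair `(ρAI, ρH)` is consistent with the Luce Alignment Model
with parameters `(u, v, α)`. -/
def LAMpair {X : Type*} (ρAI ρH : X → Finset X → ℝ) (u v : X → ℝ) (α : ℝ) : Prop :=
  LAM1 ρAI u v α ∧
    ∀ S : Finset X, S.Nonempty → ∀ x ∈ S, ρH x S = u x / ∑ y ∈ S, u y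

/-- Any Luce-type rule satisfies IIA. -/
lemma luce_iia_aux {X : Type*} [DecidableEq X] (ρ : X → Finset X → ℝ) (w : X → ℝ)
    (h : ∀ S : Finset X, S.Nonempty → ∀ x ∈ S, ρ x S = w x / ∑ y ∈ S, w y) : IIA ρ := by
  intro S T hS hT x hx y hy
  simp only [Finset.mem_inter] at hx hy
  rw [h S hS x hx.1, h S hS y hy.1, h T hT x hx.2, h T hT y hy.2]
  ring

lemma abc_zero_aux (a b c ux uy uz : ℝ) (hx : 0 < ux) (hy : 0 < uy) (hz : 0 < uz)
    (hid : uz * a - uy * b + ux * c = 0)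
    (h1 : a * (b + c) = 0) (h2 : b * (c - a) = 0) (h3 : c * (a + b) = 0) : a = 0 := by
  by_contra ha
  have hbc : b + c = 0 := by
    rcases mul_eq_zero.mp h1 with h | h
    · exact absurd h ha
    · exact h
  rcases eq_or_ne c 0 with hc0 | hc0
  · have hb0 : b = 0 := by linarith
    have hz0 : uz * a = 0 := by rw [hb0, hc0] at hid; linarith
    rcases mul_eq_zero.mp hz0 with h | h
    · exact absurd h hz.ne'
    · exact ha h
  · have hab : a + b = 0 := by
      rcases mul_eq_zero.mp h3 with h | h
      · exact absurd h hc0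
      · exact h
    have hb : b = -a := by linarith
    have hc : c = a := by linarith
    have hsum : a * (uz + uy + ux) = 0 := by
      rw [hb, hc] at hid; linear_combination hid
    rcases mul_eq_zero.mp hsum with h | h
    · exact ha h
    · nlinarith

lemma cross_zero_aux (a b c d ux uy vx vy α : ℝ) (ha : a ≠ 0) (hb : b ≠ 0) (hc : c ≠ 0)
    (hd : d ≠ 0) (hαβ : α * (1 - α) ≠ 0)
    (h : (α * (ux / a) + (1 - α) * (vx / b)) * (α * (uy / c) + (1 - α) * (vy / d)) =
         (α * (ux / c) + (1 - α) * (vx / d)) * (α * (uy / a) + (1 - α) * (vy / b))) :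
    (ux * vy - vx * uy) * (c * b - a * d) = 0 := by
  have h2 : α * (1 - α) * ((ux * vy - vx * uy) * (c * b - a * d)) * (a * b * c * d) = 0 := by
    field_simp at h
    linear_combination (a * b * c * d) * h
  rcases mul_eq_zero.mp h2 with h3 | h3
  · rcases mul_eq_zero.mp h3 with h4 | h4
    · exact absurd h4 hαβ
    · exact h4
  · exact absurd h3 (mul_ne_zero (mul_ne_zero (mul_ne_zero ha hb) hc) hd)

theorem lam_iia_characterization {X : Type*} [Fintype X] [DecidableEq X]
    (hcard : 3 ≤ Fintype.card X)
    (ρAI ρH : X → Finset X → ℝ) (hAI : IsSCF ρAI) (hH : IsSCF ρH)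
    (u v : X → ℝ) (α : ℝ) (hLAM : LAMpair ρAI ρH u v α) :
    IIA ρAI ↔ α = 0 ∨ α = 1 ∨ ∃ l : ℝ, 0 < l ∧ ∀ x, v x = l * u x := by
  obtain ⟨⟨hu, hv, hα0, hα1, hAIform⟩, hHform⟩ := hLAM
  have usum : ∀ S : Finset X, S.Nonempty → 0 < ∑ y ∈ S, u y :=
    fun S hS => Finset.sum_pos (fun i _ => hu i) hS
  have vsum : ∀ S : Finset X, S.Nonempty → 0 < ∑ y ∈ S, v y :=
    fun S hS => Finset.sum_pos (fun i _ => hv i) hS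
  constructor
  · intro hIIA
    by_cases hA0 : α = 0
    · exact Or.inl hA0
    by_cases hA1 : α = 1
    · exact Or.inr (Or.inl hA1)
    refine Or.inr (Or.inr ?_)
    have hαβ : α * (1 - α) ≠ 0 := mul_ne_zero hA0 (sub_ne_zero.mpr (Ne.symm hA1))
    -- key cross condition from IIA
    have cross : ∀ S T : Finset X, S.Nonempty → T.Nonempty → ∀ x y : X,
        x ∈ S → x ∈ T → y ∈ S → y ∈ T →
        (u x * v y - v x * u y) *
          ((∑ w ∈ T, u w) * (∑ w ∈ S, v w) - (∑ w ∈ S, u w) * (∑ w ∈ T, v w)) = 0 := by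
      intro S T hS hT x y hxS hxT hyS hyT
      have h := hIIA S T hS hT x (Finset.mem_inter.mpr ⟨hxS, hxT⟩)
        y (Finset.mem_inter.mpr ⟨hyS, hyT⟩)
      rw [hAIform S hS x hxS, hAIform T hT y hyT, hAIform T hT x hxT,
        hAIform S hS y hyS] at h
      exact cross_zero_aux _ _ _ _ _ _ _ _ _ (usum S hS).ne' (vsum S hS).ne'
        (usum T hT).ne' (vsum T hT).ne' hαβ h
    have key : ∀ x y : X, u x * v y = v x * u y := by
      intro x y
      rcases eq_or_ne x y with rfl | hxy
      · ring
      -- pick a third element z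
      have hneuniv : ({x, y} : Finset X) ≠ Finset.univ := fun hEq => by
        have h2 : ({x, y} : Finset X).card = 2 := Finset.card_pair hxy
        rw [hEq, Finset.card_univ] at h2; omega
      obtain ⟨z, _, hzmem⟩ := Finset.exists_of_ssubset
        (Finset.ssubset_univ_iff.mpr hneuniv)
      simp only [Finset.mem_insert, Finset.mem_singleton, not_or] at hzmem
      obtain ⟨hzx, hzy⟩ := hzmem
      have hxz : x ≠ z := Ne.symm hzx
      have hyz : y ≠ z := Ne.symm hzy
      -- sums over explicit sets
      have hsum3 : ∀ w : X → ℝ, ∑ t ∈ ({x, y, z} : Finset X), w t = w x + w y + w z := by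
        intro w
        rw [Finset.sum_insert (by simp [hxy, hxz]), Finset.sum_insert (by simp [hyz]),
          Finset.sum_singleton]
        ring
      have hsxy : ∀ w : X → ℝ, ∑ t ∈ ({x, y} : Finset X), w t = w x + w y :=
        fun w => Finset.sum_pair hxy
      have hsxz : ∀ w : X → ℝ, ∑ t ∈ ({x, z} : Finset X), w t = w x + w z :=
        fun w => Finset.sum_pair hxz
      have hsyz : ∀ w : X → ℝ, ∑ t ∈ ({y, z} : Finset X), w t = w y + w z :=
        fun w => Finset.sum_pair hyz
      have hne3 : ({x, y, z} : Finset X).Nonempty := ⟨x, by simp⟩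
      have E1 := cross ({x, y} : Finset X) ({x, y, z} : Finset X)
        ⟨x, by simp⟩ hne3 x y (by simp) (by simp) (by simp) (by simp)
      have E2 := cross ({x, z} : Finset X) ({x, y, z} : Finset X)
        ⟨x, by simp⟩ hne3 x z (by simp) (by simp) (by simp) (by simp)
      have E3 := cross ({y, z} : Finset X) ({x, y, z} : Finset X)
        ⟨y, by simp⟩ hne3 y z (by simp) (by simp) (by simp) (by simp)
      rw [hsum3 u, hsum3 v, hsxy u, hsxy v] at E1
      rw [hsum3 u, hsum3 v, hsxz u, hsxz v] at E2
      rw [hsum3 u, hsum3 v, hsyz u, hsyz v] at E3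
      set a := u x * v y - v x * u y with hadef
      set b := u x * v z - v x * u z with hbdef
      set c := u y * v z - v y * u z with hcdef
      have h1 : a * (b + c) = 0 := by linear_combination -E1
      have h2 : b * (c - a) = 0 := by linear_combination E2
      have h3 : c * (a + b) = 0 := by linear_combination E3
      have hid : u z * a - u y * b + u x * c = 0 := by
        rw [hadef, hbdef, hcdef]; ring
      have := abc_zero_aux a b c (u x) (u y) (u z) (hu x) (hu y) (hu z) hid h1 h2 h3
      rw [hadef] at this
      linarith
    have hX : Nonempty X := Fintype.card_pos_iff.mp (by omega)
    obtain ⟨x₀⟩ := hX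
    refine ⟨v x₀ / u x₀, div_pos (hv x₀) (hu x₀), fun x => ?_⟩
    rw [div_mul_eq_mul_div, eq_div_iff (hu x₀).ne']
    linear_combination (-1 : ℝ) * key x x₀
  · rintro (rfl | rfl | ⟨l, hl, hlv⟩)
    · exact luce_iia_aux ρAI v (fun S hS x hx => by rw [hAIform S hS x hx]; ring)
    · exact luce_iia_aux ρAI u (fun S hS x hx => by rw [hAIform S hS x hx]; ring)
    · refine luce_iia_aux ρAI u (fun S hS x hx => ?_)
      have hvsum : ∑ y ∈ S, v y = l * ∑ y ∈ S, u y := by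
        rw [Finset.mul_sum]; exact Finset.sum_congr rfl (fun y _ => hlv y)
      rw [hAIform S hS x hx, hlv x, hvsum,
        mul_div_mul_left (u x) _ hl.ne']
      ring
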